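/- arXiv:1512.03956 — 6 statements merged into one kernel-verified Lean document; each statement's English description precedes it below -/
import Mathlib

section
/- Suppose smooth functions F, G, H : ℝ → ℂ and α, w : ℝ → ℂ satisfy, for a fixed nonzero z ∈ ℂ, the equations z F' = -2(α+z)F + 2G, z G' = -(α²+w)F - H, and z H' = 2(α+z)H + 2(α²+w)G. Then the quantity G(x)² + F(x)H(x) is constant in x. -/
theorem stmt2 (z : ℂ) (hz : z ≠ 0) (F G H F' G' H' α w : ℝ → ℂ)
    (hF : ∀ x, HasDerivAt F (F' x) x) (hG : ∀ x, HasDerivAt G (G' x) x)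
    (hH : ∀ x, HasDerivAt H (H' x) x)
    (e1 : ∀ x, z * F' x = -2 * (α x + z) * F x + 2 * G x)
    (e2 : ∀ x, z * G' x = -((α x)^2 + w x) * F x - H x)
    (e3 : ∀ x, z * H' x = 2 * (α x + z) * H x + 2 * ((α x)^2 + w x) * G x) :
    ∀ x y : ℝ, (G x)^2 + F x * H x = (G y)^2 + F y * H y := by
  have key : ∀ x : ℝ, HasDerivAt (fun t => (G t)^2 + F t * H t) 0 x := by
    intro x
    have hz' : (G' x * G x + G x * G' x) + (F' x * H x + F x * H' x) = 0 := by
      have hm : z * ((G' x * G x + G x * G' x) + (F' x * H x + F x * H' x)) = 0 := by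
        linear_combination 2 * G x * e2 x + H x * e1 x + F x * e3 x
      exact (mul_eq_zero.mp hm).resolve_left hz
    have h := ((hG x).mul (hG x)).add ((hF x).mul (hH x))
    rw [hz'] at h
    have e : (fun t => (G t)^2 + F t * H t) = G * G + F * H := by
      funext t
      simp only [Pi.add_apply, Pi.mul_apply, sq]
    rw [e]
    exact h
  intro x y
  have hd : Differentiable ℝ (fun t => (G t)^2 + F t * H t) :=
    fun t => (key t).differentiableAt
  exact is_const_of_deriv_eq_zero hd (fun t => (key t).deriv) x y
end

section
/- Under the hypotheses that z F' = -2(α+z)F + 2G and z G' = -(α²+w)F - H for a fixed nonzero z, the third zero-curvature equation z H' = 2(α+z)H + 2(α²+w)G is equivalent to the identity H' + 2(α+z)G' - (α²+w)F' = 0. -/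
theorem stmt3 (z : ℂ) (hz : z ≠ 0) (F G H F' G' H' α w : ℝ → ℂ)
    (hF : ∀ x, HasDerivAt F (F' x) x) (hG : ∀ x, HasDerivAt G (G' x) x)
    (hH : ∀ x, HasDerivAt H (H' x) x)
    (e1 : ∀ x, z * F' x = -2 * (α x + z) * F x + 2 * G x)
    (e2 : ∀ x, z * G' x = -((α x)^2 + w x) * F x - H x) :
    ∀ x, (z * H' x = 2 * (α x + z) * H x + 2 * ((α x)^2 + w x) * G x) ↔
      (H' x + 2 * (α x + z) * G' x - ((α x)^2 + w x) * F' x = 0) := by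
  intro x
  have h1 := e1 x
  have h2 := e2 x
  have key : z * H' x - (2 * (α x + z) * H x + 2 * ((α x)^2 + w x) * G x)
      = z * (H' x + 2 * (α x + z) * G' x - ((α x)^2 + w x) * F' x) := by
    linear_combination ((α x)^2 + w x) * h1 - 2 * (α x + z) * h2
  constructor
  · intro h
    have : z * (H' x + 2 * (α x + z) * G' x - ((α x)^2 + w x) * F' x) = 0 := by
      rw [← key, h]; ring
    rcases mul_eq_zero.mp this with h' | h'
    · exact absurd h' hz
    · exact h'
  · intro h
    have : z * H' x - (2 * (α x + z) * H x + 2 * ((α x)^2 + w x) * G x) = 0 := by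
      rw [key, h, mul_zero]
    exact sub_eq_zero.mp this
end

section
/- Suppose the Dubrovin equations μ_j'(x) = 2 y(μ̂_j(x))/μ_j(x) · ∏_{ℓ≠j}(μ_j(x) - μ_ℓ(x))^{-1} hold on an interval, where y(μ̂_j)² = R_{2n+2}(μ_j) and R_{2n+2}(z) = ∏_{m=0}^{2n+1}(z - E_m). Define F_n(z,x) = ∏_{j=1}^n(z - μ_j(x)) and G_{n+1}(z,x) = (α+z)F_n + (z/2)F_{n,x} with α arbitrary. Then R_{2n+2}(μ_j(x)) - G_{n+1}(μ_j(x),x)² = 0 for all j and x, and consequently the polynomial z ↦ R_{2n+2}(z) - G_{n+1}(z,x)² is divisible by F_n(z,x). -/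
open Polynomial in
theorem stmt7 (n : ℕ) (E : Fin (2*n+2) → ℂ) (hE : Function.Injective E)
    (I : Set ℝ) (μ μ' : Fin n → ℝ → ℂ) (α : ℝ → ℂ)
    (y : Fin n → ℝ → ℂ)
    (R : Polynomial ℂ) (hR : R = ∏ m, (X - C (E m)))
    (hμdiff : ∀ j, ∀ x ∈ I, HasDerivAt (μ j) (μ' j x) x)
    (hdist : ∀ x ∈ I, ∀ j k, j ≠ k → μ j x ≠ μ k x)
    (hne : ∀ x ∈ I, ∀ j, μ j x ≠ 0)
    (hy : ∀ j, ∀ x ∈ I, (y j x)^2 = R.eval (μ j x))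
    (dub : ∀ j, ∀ x ∈ I, μ' j x = 2 * y j x / μ j x *
      (∏ ℓ ∈ Finset.univ.erase j, (μ j x - μ ℓ x))⁻¹)
    (F Gp : ℝ → Polynomial ℂ)
    (hF : ∀ x, F x = ∏ j, (X - C (μ j x)))
    (hG : ∀ x, Gp x = (C (α x) + X) * F x
      - C (1/2 : ℂ) * X * ∑ j, C (μ' j x) * ∏ ℓ ∈ Finset.univ.erase j, (X - C (μ ℓ x))) :
    (∀ j, ∀ x ∈ I, R.eval (μ j x) - ((Gp x).eval (μ j x))^2 = 0) ∧
    (∀ x ∈ I, F x ∣ (R - (Gp x)^2)) := by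
  have key : ∀ j, ∀ x ∈ I, R.eval (μ j x) - ((Gp x).eval (μ j x))^2 = 0 := by
    intro j x hx
    set P := ∏ ℓ ∈ Finset.univ.erase j, (μ j x - μ ℓ x) with hPdef
    have hP : P ≠ 0 := by
      rw [hPdef]
      apply Finset.prod_ne_zero_iff.mpr
      intro ℓ hℓ
      exact sub_ne_zero.mpr (hdist x hx j ℓ (Finset.ne_of_mem_erase hℓ).symm)
    have hFe : (F x).eval (μ j x) = 0 := by
      rw [hF, eval_prod]
      exact Finset.prod_eq_zero (Finset.mem_univ j) (by simp)
    have hsum : (∑ k, C (μ' k x) * ∏ ℓ ∈ Finset.univ.erase k,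
        (X - C (μ ℓ x))).eval (μ j x) = μ' j x * P := by
      rw [eval_finset_sum]
      rw [Finset.sum_eq_single j]
      · simp [eval_prod, hPdef]
      · intro k _ hk
        have hj : j ∈ Finset.univ.erase k := Finset.mem_erase.mpr ⟨(Ne.symm hk), Finset.mem_univ j⟩
        simp [eval_prod]
        right
        exact Finset.prod_eq_zero hj (by simp)
      · simp
    have hGe : (Gp x).eval (μ j x) = -(y j x) := by
      rw [hG]
      simp only [eval_sub, eval_mul, eval_add, eval_C, eval_X, hFe, hsum, mul_zero]
      rw [dub j x hx]
      field_simp [hne x hx j, ← hPdef, hP]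
      ring
    rw [hGe, neg_pow, hy j x hx]
    ring
  refine ⟨key, fun x hx => ?_⟩
  rw [hF x]
  apply Finset.prod_dvd_of_coprime
  · exact (Polynomial.pairwise_coprime_X_sub_C
      (fun a b hab => by_contra fun h => hdist x hx a b h hab)).set_pairwise _
  · intro j _
    rw [dvd_iff_isRoot]
    have h := sub_eq_zero.mp (key j x hx)
    simp [IsRoot, eval_pow, h]
end

section
/- Under Hypothesis on real branch points E_0 < E_1 < ... < E_{2n+1} and the sign convention for R_{2n+2}(λ)^{1/2} on ℝ, the function z ↦ P_n(z)/R_{2n+2}(z)^{1/2}, where P_n(z) = ∏_{j=1}^n(z - a_j) with a_j ∈ [E_{2j-1}, E_{2j}], maps the open upper half-plane into the closed upper half-plane, i.e., it is a Nevanlinna–Herglotz function. -/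
open Finset

private lemma quot_mono {y x1 x2 : ℝ} (hy : 0 < y) (h : x1 ≤ x2) :
    x1 / Real.sqrt (x1^2 + y^2) ≤ x2 / Real.sqrt (x2^2 + y^2) := by
  have hs1 : 0 < Real.sqrt (x1^2 + y^2) := Real.sqrt_pos.mpr (by positivity)
  have hs2 : 0 < Real.sqrt (x2^2 + y^2) := Real.sqrt_pos.mpr (by positivity)
  set s1 := Real.sqrt (x1^2 + y^2) with hs1d
  set s2 := Real.sqrt (x2^2 + y^2) with hs2d
  have hq1 : s1^2 = x1^2 + y^2 := Real.sq_sqrt (by positivity)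
  have hq2 : s2^2 = x2^2 + y^2 := Real.sq_sqrt (by positivity)
  rw [div_le_div_iff₀ hs1 hs2]
  rcases le_total 0 x1 with h1 | h1
  · have hx12 : x1^2 ≤ x2^2 := by nlinarith
    have key : (x1*s2)^2 ≤ (x2*s1)^2 := by nlinarith [sq_nonneg y]
    have h2 : 0 ≤ x2 * s1 := mul_nonneg (le_trans h1 h) hs1.le
    have h3 : 0 ≤ x1 * s2 := mul_nonneg h1 hs2.le
    nlinarith [key, h2, h3]
  · rcases le_total 0 x2 with h2 | h2
    · have h3 : x1 * s2 ≤ 0 := mul_nonpos_of_nonpos_of_nonneg h1 hs2.le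
      have h4 : 0 ≤ x2 * s1 := mul_nonneg h2 hs1.le
      linarith
    · have hx12 : x2^2 ≤ x1^2 := by nlinarith
      have key : (x2*s1)^2 ≤ (x1*s2)^2 := by nlinarith [sq_nonneg y]
      have h3 : 0 ≤ (-x1) * s2 := mul_nonneg (by linarith) hs2.le
      have h4 : 0 ≤ (-x2) * s1 := mul_nonneg (by linarith) hs1.le
      nlinarith [key, h3, h4]

private lemma arg_sub_mono {z : ℂ} (hz : 0 < z.im) {c c' : ℝ} (h : c ≤ c') :
    (z - (c:ℂ)).arg ≤ (z - (c':ℂ)).arg := by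
  have h1 : (z - (c:ℂ)).im = z.im := by simp
  have h2 : (z - (c':ℂ)).im = z.im := by simp
  rw [Complex.arg_of_im_pos (by rw [h1]; exact hz),
      Complex.arg_of_im_pos (by rw [h2]; exact hz)]
  have habs : ∀ x : ℝ, ‖z - (x:ℂ)‖ = Real.sqrt ((z.re - x)^2 + z.im^2) := by
    intro x
    rw [Complex.norm_def, Complex.normSq_apply]
    congr 1
    simp
    ring
  have hre : ∀ x : ℝ, (z - (x:ℂ)).re = z.re - x := by intro x; simp
  have hanti : Antitone Real.arccos := by
    intro a b hab
    rw [Real.arccos_eq_pi_div_two_sub_arcsin, Real.arccos_eq_pi_div_two_sub_arcsin]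
    exact sub_le_sub_left (Real.monotone_arcsin hab) _
  apply hanti
  rw [habs c, habs c', hre c, hre c']
  exact quot_mono hz (by linarith)

private lemma aux_sum_upper (n : ℕ) (ψ φ : ℕ → ℝ) (hψ0 : ∀ m, 0 ≤ ψ m)
    (hmono : ∀ m, m + 1 ≤ 2*n+1 → ψ m ≤ ψ (m+1))
    (hφu : ∀ j, 1 ≤ j → j ≤ n → φ j ≤ ψ (2*j)) :
    ∑ j ∈ Icc 1 n, φ j ≤ (1/2) * ∑ m ∈ range (2*n+2), ψ m := by
  induction n with
  | zero =>
      have e : (2*0+2) = 0 + 1 + 1 := by norm_num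
      rw [e, Finset.sum_range_succ, Finset.sum_range_succ]
      simp only [Finset.Icc_self, show Finset.Icc 1 0 = ∅ from rfl, Finset.sum_empty]
      have := hψ0 0; have := hψ0 1
      simp only [Finset.sum_empty, Finset.range_zero]
      linarith
  | succ n ih =>
      have ih' := ih (fun m hm => hmono m (by omega)) (fun j h1 h2 => hφu j h1 (by omega))
      rw [Finset.sum_Icc_succ_top (by omega : 1 ≤ n + 1)]
      have e : 2*(n+1)+2 = (2*n+2) + 1 + 1 := by ring
      rw [e, Finset.sum_range_succ, Finset.sum_range_succ]
      have hu : φ (n+1) ≤ ψ (2*(n+1)) := hφu (n+1) (by omega) (by omega)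
      have e2 : 2*(n+1) = 2*n+2 := by ring
      rw [e2] at hu
      have hm : ψ (2*n+2) ≤ ψ (2*n+2+1) := hmono (2*n+2) (by omega)
      linarith

private lemma aux_sum_lower (n : ℕ) (ψ φ : ℕ → ℝ)
    (hmono : ∀ m, m + 1 ≤ 2*n+1 → ψ m ≤ ψ (m+1))
    (hφl : ∀ j, 1 ≤ j → j ≤ n → ψ (2*j-1) ≤ φ j) :
    ∑ m ∈ range (2*n+2), ψ m ≤ 2 * ∑ j ∈ Icc 1 n, φ j + 2 * ψ (2*n+1) := by
  induction n with
  | zero =>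
      have e : (2*0+2) = 0 + 1 + 1 := by norm_num
      rw [e, Finset.sum_range_succ, Finset.sum_range_succ]
      simp only [show Finset.Icc 1 0 = ∅ from rfl, Finset.sum_empty, Finset.range_zero]
      have := hmono 0 (by omega)
      norm_num
      linarith
  | succ n ih =>
      have ih' := ih (fun m hm => hmono m (by omega)) (fun j h1 h2 => hφl j h1 (by omega))
      rw [Finset.sum_Icc_succ_top (by omega : 1 ≤ n + 1)]
      have e : 2*(n+1)+2 = (2*n+2) + 1 + 1 := by ring
      rw [e, Finset.sum_range_succ, Finset.sum_range_succ]
      have hl : ψ (2*(n+1)-1) ≤ φ (n+1) := hφl (n+1) (by omega) (by omega)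
      have e2 : 2*(n+1)-1 = 2*n+1 := by omega
      rw [e2] at hl
      have hm : ψ (2*n+2) ≤ ψ (2*n+2+1) := hmono (2*n+2) (by omega)
      have e3 : 2*(n+1)+1 = 2*n+2+1 := by ring
      rw [e3]
      linarith

theorem stmt13 (n : ℕ) (E : ℕ → ℝ)
    (hE : ∀ m, m + 1 ≤ 2*n+1 → E m < E (m+1))
    (S : Set ℂ)
    (hS : S = {z : ℂ | z.im = 0 ∧ ∃ ℓ ≤ n, z.re ∈ Set.Icc (E (2*ℓ)) (E (2*ℓ+1))})
    (r : ℂ → ℂ)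
    (hr_an : DifferentiableOn ℂ r Sᶜ)
    (hr_sq : ∀ z ∉ S, (r z)^2 = ∏ m ∈ Finset.range (2*n+2), (z - (E m : ℂ)))
    (hr_sign : ∀ lam : ℝ, E (2*n+1) < lam → (r lam).im = 0 ∧ (r lam).re < 0)
    (a : ℕ → ℝ) (ha : ∀ j, 1 ≤ j → j ≤ n → a j ∈ Set.Icc (E (2*j-1)) (E (2*j))) :
    ∀ z : ℂ, 0 < z.im →
      0 ≤ ((∏ j ∈ Finset.Icc 1 n, (z - (a j : ℂ))) / r z).im := by
  -- monotonicity of E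
  have Emono : ∀ {i j : ℕ}, i ≤ j → j ≤ 2*n+1 → E i ≤ E j := by
    intro i j hij hj
    induction j with
    | zero => exact le_of_eq (congrArg E (Nat.le_zero.mp hij))
    | succ k ih =>
        rcases Nat.lt_or_ge i (k+1) with hik | hik
        · exact le_trans (ih (by omega) (by omega)) (hE k (by omega)).le
        · have : i = k + 1 := by omega
          simp [this]
  set c : ℝ := E (2*n+1) with hc
  -- the connected open set W
  set W : Set ℂ := {w : ℂ | 0 < w.im} ∪ {w : ℂ | c < w.re} with hW
  have hWopen : IsOpen W :=
    (isOpen_lt continuous_const Complex.continuous_im).union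
      (isOpen_lt continuous_const Complex.continuous_re)
  have hWpre : IsPreconnected W := by
    apply IsPreconnected.union ((c+1 : ℝ) + Complex.I)
    · show (0:ℝ) < ((c+1 : ℝ) + Complex.I).im
      simp
    · show c < ((c+1 : ℝ) + Complex.I).re
      simp
    · exact (convex_halfSpace_im_gt 0).isPreconnected
    · exact (convex_halfSpace_re_gt c).isPreconnected
  have hWS : W ⊆ Sᶜ := by
    intro w hw hwS
    rw [hS] at hwS
    obtain ⟨him, ℓ, hℓ, hre⟩ := hwS
    rcases hw with hw | hw
    · exact absurd him (by simp only [Set.mem_setOf_eq] at hw; linarith)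
    · simp only [Set.mem_setOf_eq] at hw
      have : E (2*ℓ+1) ≤ c := Emono (by omega) (by omega)
      have := hre.2
      linarith
  have hWslit : ∀ w ∈ W, ∀ m, m ≤ 2*n+1 → (w - (E m : ℂ)) ∈ Complex.slitPlane := by
    intro w hw m hm
    rcases hw with hw | hw
    · right
      simp only [Set.mem_setOf_eq] at hw
      simp only [Complex.sub_im, Complex.ofReal_im, sub_zero]
      linarith
    · left
      simp only [Set.mem_setOf_eq] at hw
      have : E m ≤ c := Emono hm le_rfl
      simp only [Complex.sub_re, Complex.ofReal_re]
      linarith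
  have hWne : ∀ w ∈ W, ∀ m, m ≤ 2*n+1 → w - (E m : ℂ) ≠ 0 := fun w hw m hm =>
    Complex.slitPlane_ne_zero (hWslit w hw m hm)
  -- the explicit square root g
  set g : ℂ → ℂ := fun w => -∏ m ∈ Finset.range (2*n+2), (w - (E m : ℂ)) ^ ((1:ℂ)/2) with hg
  have hgne : ∀ w ∈ W, g w ≠ 0 := by
    intro w hw
    simp only [hg, ne_eq, neg_eq_zero]
    rw [Finset.prod_eq_zero_iff]
    push_neg
    intro m hm
    rw [Finset.mem_range] at hm
    intro hzero
    rw [Complex.cpow_eq_zero_iff] at hzero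
    exact hWne w hw m (by omega) hzero.1
  have hgsq : ∀ w ∈ W, (g w)^2 = ∏ m ∈ Finset.range (2*n+2), (w - (E m : ℂ)) := by
    intro w hw
    have : (g w)^2 = ∏ m ∈ Finset.range (2*n+2), ((w - (E m : ℂ)) ^ ((1:ℂ)/2))^2 := by
      rw [hg]
      simp only [neg_sq]
      rw [← Finset.prod_pow]
    rw [this]
    apply Finset.prod_congr rfl
    intro m hm
    rw [Finset.mem_range] at hm
    have hne := hWne w hw m (by omega)
    rw [sq, ← Complex.cpow_add _ _ hne]
    norm_num
  have hgx : ∀ w ∈ W, r w = g w ∨ r w = -g w := by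
    intro w hw
    have h1 : (r w)^2 = (g w)^2 := by rw [hr_sq w (hWS hw), hgsq w hw]
    have h2 : (r w - g w) * (r w + g w) = 0 := by linear_combination h1
    rcases mul_eq_zero.mp h2 with h | h
    · left; exact sub_eq_zero.mp h
    · right; exact eq_neg_of_add_eq_zero_left h
  -- continuity of q = r / g on W
  set q : ℂ → ℂ := fun w => r w / g w with hq
  have hrcont : ContinuousOn r W := hr_an.continuousOn.mono hWS
  have hgcont : ContinuousOn g W := by
    apply ContinuousOn.neg
    apply continuousOn_finset_prod
    intro m hm
    rw [Finset.mem_range] at hm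
    intro w hw
    apply ContinuousAt.continuousWithinAt
    exact ContinuousAt.cpow ((continuous_id.sub continuous_const).continuousAt)
      continuousAt_const (hWslit w hw m (by omega))
  have hqcont : ContinuousOn q W := hrcont.div hgcont hgne
  -- q takes values ±1 on W
  have hqpm : ∀ w ∈ W, q w = 1 ∨ q w = -1 := by
    intro w hw
    rcases hgx w hw with h | h
    · left; rw [hq]; simp only; rw [h, div_self (hgne w hw)]
    · right; rw [hq]; simp only; rw [h, neg_div, div_self (hgne w hw)]
  -- base point
  have hbase : q ((c+1 : ℝ) : ℂ) = 1 := by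
    have hmem : ((c+1 : ℝ) : ℂ) ∈ W := by
      right
      simp only [Set.mem_setOf_eq, Complex.ofReal_re]
      linarith
    have hgneg : ∃ K : ℝ, 0 < K ∧ g ((c+1 : ℝ) : ℂ) = -(K : ℂ) := by
      refine ⟨∏ m ∈ Finset.range (2*n+2), (c + 1 - E m) ^ ((1:ℝ)/2), ?_, ?_⟩
      · apply Finset.prod_pos
        intro m hm
        rw [Finset.mem_range] at hm
        have : E m ≤ c := Emono (by omega) le_rfl
        exact Real.rpow_pos_of_pos (by linarith) _
      · rw [hg]
        simp only [neg_inj]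
        rw [Complex.ofReal_prod]
        apply Finset.prod_congr rfl
        intro m hm
        rw [Finset.mem_range] at hm
        have hle : E m ≤ c := Emono (by omega) le_rfl
        have h0 : (0:ℝ) ≤ c + 1 - E m := by linarith
        rw [Complex.ofReal_cpow h0]
        push_cast
        ring_nf
    obtain ⟨K, hK, hgK⟩ := hgneg
    have hrg : r ((c+1 : ℝ) : ℂ) = g ((c+1 : ℝ) : ℂ) := by
      rcases hgx _ hmem with h | h
      · exact h
      · exfalso
        have hsign := hr_sign (c+1) (by linarith)
        rw [h, hgK] at hsign
        simp only [neg_neg, Complex.ofReal_re] at hsign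
        linarith [hsign.2]
    rw [hq]; simp only; rw [hrg, div_self (hgne _ hmem)]
  -- clopen argument: q = 1 on W
  have hqone : ∀ w ∈ W, q w = 1 := by
    have hu : IsOpen (W ∩ q ⁻¹' Metric.ball (1:ℂ) 1) :=
      hqcont.isOpen_inter_preimage hWopen Metric.isOpen_ball
    have hv : IsOpen (W ∩ q ⁻¹' Metric.ball (-1:ℂ) 1) :=
      hqcont.isOpen_inter_preimage hWopen Metric.isOpen_ball
    have hdisj : Disjoint (W ∩ q ⁻¹' Metric.ball (1:ℂ) 1) (W ∩ q ⁻¹' Metric.ball (-1:ℂ) 1) := by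
      rw [Set.disjoint_iff]
      rintro x ⟨⟨hxW, hx1⟩, ⟨-, hx2⟩⟩
      simp only [Set.mem_preimage, Metric.mem_ball] at hx1 hx2
      have : dist (1:ℂ) (-1) ≤ dist (1:ℂ) (q x) + dist (q x) (-1) := dist_triangle _ _ _
      rw [dist_comm (1:ℂ) (q x)] at this
      have hd : dist (1:ℂ) (-1) = 2 := by
        rw [dist_eq_norm]
        norm_num
      rw [hd] at this
      linarith
    have hsub : W ⊆ (W ∩ q ⁻¹' Metric.ball (1:ℂ) 1) ∪ (W ∩ q ⁻¹' Metric.ball (-1:ℂ) 1) := by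
      intro w hw
      rcases hqpm w hw with h | h
      · left; exact ⟨hw, by simp [h]⟩
      · right; exact ⟨hw, by simp [h]⟩
    have hne : (W ∩ (W ∩ q ⁻¹' Metric.ball (1:ℂ) 1)).Nonempty := by
      refine ⟨((c+1 : ℝ) : ℂ), ?_, ?_, ?_⟩
      · right; simp only [Set.mem_setOf_eq, Complex.ofReal_re]; linarith
      · right; simp only [Set.mem_setOf_eq, Complex.ofReal_re]; linarith
      · have hbase' : q ((c:ℂ)+1) = 1 := by
          rw [show (c:ℂ)+1 = ((c+1:ℝ):ℂ) by push_cast; ring]; exact hbase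
        simp [hbase, hbase']
    have := hWpre.subset_left_of_subset_union hu hv hdisj hsub hne
    intro w hw
    have hmem := this hw
    rcases hqpm w hw with h | h
    · exact h
    · exfalso
      have := hmem.2
      simp only [Set.mem_preimage, Metric.mem_ball, h] at this
      have hd : dist (-1:ℂ) 1 = 2 := by
        rw [dist_eq_norm]
        norm_num
      rw [hd] at this
      linarith
  -- hence r = g on W
  have hrg : ∀ w ∈ W, r w = g w := by
    intro w hw
    have := hqone w hw
    rw [hq] at this
    simp only at this
    field_simp [hgne w hw] at this
    exact this
  -- now the main estimate
  intro z hz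
  have hzW : z ∈ W := Or.inl hz
  rw [hrg z hzW]
  set ψ : ℕ → ℝ := fun m => (z - (E m : ℂ)).arg with hψ
  set φ : ℕ → ℝ := fun j => (z - (a j : ℂ)).arg with hφ
  have him : ∀ x : ℝ, (z - (x:ℂ)).im = z.im := by intro x; simp
  have hne0 : ∀ x : ℝ, z - (x:ℂ) ≠ 0 := by
    intro x h
    have h2 := him x
    rw [h] at h2
    simp only [Complex.zero_im] at h2
    linarith
  have hψ0 : ∀ m, 0 ≤ ψ m := fun m => Complex.arg_nonneg_iff.mpr (by rw [him]; exact hz.le)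
  have hψπ : ∀ m, ψ m ≤ Real.pi := fun m => Complex.arg_le_pi _
  have hψmono : ∀ m, m + 1 ≤ 2*n+1 → ψ m ≤ ψ (m+1) := fun m hm => arg_sub_mono hz (hE m hm).le
  have hφu : ∀ j, 1 ≤ j → j ≤ n → φ j ≤ ψ (2*j) := fun j h1 h2 =>
    arg_sub_mono hz (ha j h1 h2).2
  have hφl : ∀ j, 1 ≤ j → j ≤ n → ψ (2*j-1) ≤ φ j := fun j h1 h2 =>
    arg_sub_mono hz (ha j h1 h2).1
  set σφ : ℝ := ∑ j ∈ Finset.Icc 1 n, φ j with hσφ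
  set σψ : ℝ := ∑ m ∈ Finset.range (2*n+2), ψ m with hσψ
  have hsum1 : σφ ≤ (1/2) * σψ := aux_sum_upper n ψ φ hψ0 hψmono hφu
  have hsum2 : σψ ≤ 2*σφ + 2*ψ (2*n+1) := aux_sum_lower n ψ φ hψmono hφl
  set ρ1 : ℝ := ∏ j ∈ Finset.Icc 1 n, ‖z - (a j : ℂ)‖ with hρ1
  have hP : ∏ j ∈ Finset.Icc 1 n, (z - (a j : ℂ))
      = (ρ1 : ℂ) * Complex.exp ((σφ : ℂ) * Complex.I) := by
    calc ∏ j ∈ Finset.Icc 1 n, (z - (a j : ℂ))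
        = ∏ j ∈ Finset.Icc 1 n,
            ((‖z - (a j:ℂ)‖ : ℂ) * Complex.exp ((φ j : ℂ) * Complex.I)) := by
          refine Finset.prod_congr rfl fun j hj => ?_
          exact (Complex.norm_mul_exp_arg_mul_I _).symm
      _ = (ρ1 : ℂ) * Complex.exp ((σφ : ℂ) * Complex.I) := by
          rw [Finset.prod_mul_distrib, ← Complex.exp_sum, hρ1, Complex.ofReal_prod, hσφ,
            Complex.ofReal_sum, Finset.sum_mul]
  set L : ℝ := ∑ m ∈ Finset.range (2*n+2), Real.log (‖z - (E m : ℂ)‖) with hL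
  have hG : ∏ m ∈ Finset.range (2*n+2), (z - (E m : ℂ)) ^ ((1:ℂ)/2)
      = ((Real.exp (L/2) : ℝ) : ℂ) * Complex.exp (((σψ/2 : ℝ) : ℂ) * Complex.I) := by
    have h1 : ∀ m ∈ Finset.range (2*n+2), (z - (E m : ℂ)) ^ ((1:ℂ)/2)
        = Complex.exp (Complex.log (z - (E m:ℂ)) * ((1:ℂ)/2)) := fun m hm =>
      Complex.cpow_def_of_ne_zero (hne0 _) _
    rw [Finset.prod_congr rfl h1, ← Complex.exp_sum]
    have h4 : ∀ m ∈ Finset.range (2*n+2), Complex.log (z - (E m:ℂ))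
        = ((Real.log (‖z - (E m:ℂ)‖) : ℝ):ℂ) + ((ψ m : ℝ):ℂ) * Complex.I := by
      intro m hm
      rfl
    have h3 : ∑ m ∈ Finset.range (2*n+2), Complex.log (z - (E m:ℂ))
        = ((L : ℝ):ℂ) + ((σψ:ℝ):ℂ) * Complex.I := by
      rw [Finset.sum_congr rfl h4, Finset.sum_add_distrib, hL, Complex.ofReal_sum, hσψ,
        Complex.ofReal_sum, Finset.sum_mul]
    have h2 : ∑ m ∈ Finset.range (2*n+2), Complex.log (z - (E m:ℂ)) * ((1:ℂ)/2)
        = ((L/2 : ℝ) : ℂ) + ((σψ/2 : ℝ):ℂ) * Complex.I := by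
      rw [← Finset.sum_mul, h3]
      push_cast
      ring
    rw [h2, Complex.exp_add, Complex.ofReal_exp]
  have hρ10 : 0 ≤ ρ1 := Finset.prod_nonneg fun j _ => norm_nonneg _
  have hf : (∏ j ∈ Finset.Icc 1 n, (z - (a j : ℂ))) / g z
      = ((ρ1 / Real.exp (L/2) : ℝ) : ℂ)
        * Complex.exp (((σφ - σψ/2 + Real.pi : ℝ) : ℂ) * Complex.I) := by
    simp only [hg]
    rw [hP, hG]
    have he1 : Complex.exp (((σφ - σψ/2 + Real.pi : ℝ):ℂ) * Complex.I)
        = Complex.exp ((σφ:ℂ) * Complex.I)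
          * (Complex.exp (((σψ/2:ℝ):ℂ) * Complex.I))⁻¹ * (-1) := by
      rw [← Complex.exp_pi_mul_I, ← Complex.exp_neg, ← Complex.exp_add, ← Complex.exp_add]
      congr 1
      push_cast
      ring
    rw [he1]
    have hexpne : Complex.exp (((σψ/2:ℝ):ℂ) * Complex.I) ≠ 0 := Complex.exp_ne_zero _
    have heLne : ((Real.exp (L/2) : ℝ):ℂ) ≠ 0 := by
      simp [Real.exp_ne_zero]
    push_cast
    field_simp
    try ring
  rw [hf]
  have him2 : ∀ x y : ℝ, ((x:ℂ) * Complex.exp ((y:ℂ) * Complex.I)).im = x * Real.sin y := by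
    intro x y
    simp only [Complex.mul_im, Complex.ofReal_re, Complex.ofReal_im,
      Complex.exp_ofReal_mul_I_im, Complex.exp_ofReal_mul_I_re, zero_mul, add_zero]
  rw [him2]
  apply mul_nonneg
  · exact div_nonneg hρ10 (Real.exp_pos _).le
  · apply Real.sin_nonneg_of_nonneg_of_le_pi
    · have := hψπ (2*n+1)
      linarith
    · linarith
end

section
/- There is no monic polynomial P of degree n+2 such that P(z)/R_{2n+2}(z)^{1/2} is a Nevanlinna–Herglotz function, where R_{2n+2}(z) = ∏_{m=0}^{2n+1}(z - E_m) with E_0 < ... < E_{2n+1} real and the square root branch is chosen so that R_{2n+2}(λ)^{1/2} ~ -λ^{n+1} as λ → +∞ along the real axis. -/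
open Polynomial Finset Complex

lemma evalDivBound (Q : Polynomial ℂ) (d : ℕ) (hd : Q.natDegree = d) (hm : Q.Monic)
    (z : ℂ) (h1 : 1 ≤ ‖z‖)
    (h8 : 8 * ∑ i ∈ Finset.range (d+1), ‖Q.coeff i‖ ≤ ‖z‖) :
    ‖Q.eval z / z^d - 1‖ ≤ 1/8 := by
  have hz0 : z ≠ 0 := by
    intro h; rw [h] at h1; simp at h1; linarith
  have hzpos : (0:ℝ) < ‖z‖ := by linarith
  have hcd : Q.coeff d = 1 := by
    rw [← hd]; exact hm.coeff_natDegree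
  have heval : Q.eval z = ∑ i ∈ Finset.range (d+1), Q.coeff i * z^i := by
    rw [Polynomial.eval_eq_sum_range, hd]
  have hkey : Q.eval z / z^d - 1 = ∑ i ∈ Finset.range d, Q.coeff i * z^i / z^d := by
    rw [heval, Finset.sum_range_succ, hcd, one_mul, add_div, div_self (pow_ne_zero d hz0),
      Finset.sum_div]
    ring
  rw [hkey]
  have hbound : ∀ i ∈ Finset.range d, ‖Q.coeff i * z^i / z^d‖ ≤ ‖Q.coeff i‖ * (1/‖z‖) := by
    intro i hi
    rw [Finset.mem_range] at hi
    rw [norm_div, norm_mul, norm_pow, norm_pow]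
    rw [div_le_iff₀ (by positivity)]
    have h1' : ‖z‖^i ≤ ‖z‖^(d-1) := pow_le_pow_right₀ h1 (by omega)
    have hpow : ‖z‖ ^ d = ‖z‖^(d-1) * ‖z‖ := by
      rw [← pow_succ]; congr 1; omega
    rw [hpow]
    have hc : (0:ℝ) ≤ ‖Q.coeff i‖ := norm_nonneg _
    calc ‖Q.coeff i‖ * ‖z‖^i ≤ ‖Q.coeff i‖ * ‖z‖^(d-1) := by nlinarith
    _ = ‖Q.coeff i‖ * (1/‖z‖) * (‖z‖^(d-1) * ‖z‖) := by
      have hq : ‖Q.coeff i‖ * (1/‖z‖) * (‖z‖^(d-1) * ‖z‖)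
          = ‖Q.coeff i‖ * ‖z‖^(d-1) * (‖z‖ / ‖z‖) := by ring
      rw [hq, div_self (ne_of_gt hzpos), mul_one]
  calc ‖∑ i ∈ Finset.range d, Q.coeff i * z^i / z^d‖
      ≤ ∑ i ∈ Finset.range d, ‖Q.coeff i * z^i / z^d‖ := norm_sum_le _ _
    _ ≤ ∑ i ∈ Finset.range d, ‖Q.coeff i‖ * (1/‖z‖) := Finset.sum_le_sum hbound
    _ = (∑ i ∈ Finset.range d, ‖Q.coeff i‖) * (1/‖z‖) := by rw [← Finset.sum_mul]
    _ ≤ 1/8 := by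
        have hS : ∑ i ∈ Finset.range (d+1), ‖Q.coeff i‖
            = (∑ i ∈ Finset.range d, ‖Q.coeff i‖) + 1 := by
          rw [Finset.sum_range_succ, hcd]; simp
        have hT0 : 0 ≤ ∑ i ∈ Finset.range d, ‖Q.coeff i‖ :=
          Finset.sum_nonneg fun i _ => norm_nonneg _
        rw [hS] at h8
        rw [mul_one_div, div_le_iff₀ hzpos]
        linarith
theorem stmt14 (n : ℕ) (E : ℕ → ℝ)
    (hE : ∀ m, m + 1 ≤ 2*n+1 → E m < E (m+1))
    (S : Set ℂ)
    (hS : S = {z : ℂ | z.im = 0 ∧ ∃ ℓ ≤ n, z.re ∈ Set.Icc (E (2*ℓ)) (E (2*ℓ+1))})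
    (r : ℂ → ℂ)
    (hr_an : DifferentiableOn ℂ r Sᶜ)
    (hr_sq : ∀ z ∉ S, (r z)^2 = ∏ m ∈ Finset.range (2*n+2), (z - (E m : ℂ)))
    (hr_sign : ∀ lam : ℝ, E (2*n+1) < lam → (r lam).im = 0 ∧ (r lam).re < 0) :
    ¬ ∃ P : Polynomial ℂ, P.Monic ∧ P.natDegree = n + 2 ∧
      ∀ z : ℂ, 0 < z.im → 0 ≤ (P.eval z / r z).im := by
  rintro ⟨P, hPm, hPdeg, hherg⟩
  -- the polynomial whose eval is the product
  set Q : Polynomial ℂ := ∏ m ∈ Finset.range (2*n+2), (X - C (E m : ℂ)) with hQdef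
  have hQm : Q.Monic := monic_prod_of_monic _ _ (fun m _ => monic_X_sub_C _)
  have hQdeg : Q.natDegree = 2*n+2 := by
    rw [hQdef, Polynomial.natDegree_prod_of_monic _ _ (fun m _ => monic_X_sub_C _)]
    simp
  have hQeval : ∀ z : ℂ, Q.eval z = ∏ m ∈ Finset.range (2*n+2), (z - (E m : ℂ)) := by
    intro z; simp [hQdef, Polynomial.eval_prod]
  -- monotonicity of E
  have hmono : ∀ j, j ≤ 2*n+1 → ∀ i, i ≤ j → E i ≤ E j := by
    intro j hj
    induction j with
    | zero => intro i hi; rw [Nat.le_zero.mp hi]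
    | succ k ih =>
      intro i hi
      rcases Nat.lt_or_ge i (k+1) with h | h
      · exact le_trans (ih (by omega) i (by omega)) (le_of_lt (hE k hj))
      · have : i = k+1 := by omega
        rw [this]
  -- radius
  set S₁ : ℝ := ∑ i ∈ Finset.range (n+2+1), ‖P.coeff i‖ with hS₁
  set S₂ : ℝ := ∑ i ∈ Finset.range (2*n+2+1), ‖Q.coeff i‖ with hS₂
  set R : ℝ := max (max (8*S₁) (8*S₂)) (max 1 (E (2*n+1) + 1)) with hRdef
  have hR1 : 1 ≤ R := le_trans (le_max_left _ _) (le_max_right _ _)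
  have hRpos : (0:ℝ) < R := lt_of_lt_of_le one_pos hR1
  have hRE : E (2*n+1) < R :=
    lt_of_lt_of_le (by linarith) (le_trans (le_max_right _ _) (le_max_right _ _))
  have hRS₁ : 8*S₁ ≤ R := le_trans (le_max_left _ _) (le_max_left _ _)
  have hRS₂ : 8*S₂ ≤ R := le_trans (le_max_right _ _) (le_max_left _ _)
  -- the quarter circle
  set γ : ℝ → ℂ := fun θ => (R:ℂ) * Complex.exp (θ * I) with hγdef
  have hγnorm : ∀ θ : ℝ, ‖γ θ‖ = R := by
    intro θ
    rw [hγdef]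
    simp [Complex.norm_exp_ofReal_mul_I, abs_of_pos hRpos]
  have hγ0 : γ 0 = (R:ℂ) := by simp [hγdef]
  have hγim : ∀ θ : ℝ, (γ θ).im = R * Real.sin θ := by
    intro θ; simp [hγdef, Complex.exp_ofReal_mul_I_re, Complex.exp_ofReal_mul_I_im]
  have hγre : ∀ θ : ℝ, (γ θ).re = R * Real.cos θ := by
    intro θ; simp [hγdef, Complex.exp_ofReal_mul_I_re, Complex.exp_ofReal_mul_I_im]
  have hγ0ne : ∀ θ : ℝ, γ θ ≠ 0 := by
    intro θ h
    have := hγnorm θ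
    rw [h] at this; simp at this; linarith
  -- the arc avoids S
  have hnotS : ∀ θ ∈ Set.Icc (0:ℝ) (Real.pi/2), γ θ ∉ S := by
    intro θ hθ hmem
    rw [hS] at hmem
    obtain ⟨him, ℓ, hℓ, hre⟩ := hmem
    have hre2 : (γ θ).re ≤ E (2*n+1) :=
      le_trans hre.2 (hmono (2*n+1) le_rfl (2*ℓ+1) (by omega))
    have hsin : Real.sin θ = 0 := by
      have := hγim θ
      rw [him] at this
      rcases mul_eq_zero.mp this.symm with h | h
      · linarith
      · exact h
    have hθ0 : θ = 0 := by
      by_contra hne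
      have hθpos : 0 < θ := lt_of_le_of_ne hθ.1 (Ne.symm hne)
      have : 0 < Real.sin θ :=
        Real.sin_pos_of_pos_of_lt_pi hθpos (lt_of_le_of_lt hθ.2 (by linarith [Real.pi_pos]))
      linarith
    rw [hθ0, hγ0] at hre2
    simp at hre2
    linarith
  -- the branch ratio
  set g : ℝ → ℂ := fun θ => r (γ θ) / (γ θ)^(n+1) with hgdef
  have hγcont : Continuous γ :=
    continuous_const.mul
      (Complex.continuous_exp.comp (Complex.continuous_ofReal.mul continuous_const))
  have hgcont : ContinuousOn g (Set.Icc 0 (Real.pi/2)) := by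
    apply ContinuousOn.div
    · exact hr_an.continuousOn.comp hγcont.continuousOn (fun θ hθ => hnotS θ hθ)
    · exact ((hγcont.pow _)).continuousOn
    · intro θ _; exact pow_ne_zero _ (hγ0ne θ)
  -- square of g is close to 1
  have hgsq : ∀ θ ∈ Set.Icc (0:ℝ) (Real.pi/2), ‖(g θ)^2 - 1‖ ≤ 1/8 := by
    intro θ hθ
    have h1 : (g θ)^2 = Q.eval (γ θ) / (γ θ)^(2*n+2) := by
      rw [hgdef]
      simp only
      rw [div_pow, ← pow_mul, hQeval, ← hr_sq (γ θ) (hnotS θ hθ)]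
      congr 2
      ring
    rw [h1]
    exact evalDivBound Q (2*n+2) hQdeg hQm (γ θ) (by rw [hγnorm]; exact hR1)
      (by rw [hγnorm]; exact hRS₂)
  have hprod : ∀ θ ∈ Set.Icc (0:ℝ) (Real.pi/2), ‖g θ - 1‖ * ‖g θ + 1‖ ≤ 1/8 := by
    intro θ hθ
    rw [← norm_mul]
    have : (g θ - 1) * (g θ + 1) = (g θ)^2 - 1 := by ring
    rw [this]
    exact hgsq θ hθ
  have hsum : ∀ θ : ℝ, 2 ≤ ‖g θ - 1‖ + ‖g θ + 1‖ := by
    intro θ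
    have h2 : (g θ + 1) - (g θ - 1) = 2 := by ring
    have := norm_sub_le (g θ + 1) (g θ - 1)
    rw [h2] at this
    have h2' : ‖(2:ℂ)‖ = 2 := by norm_num
    rw [h2'] at this
    linarith
  set h : ℝ → ℝ := fun θ => ‖g θ - 1‖ - ‖g θ + 1‖ with hhdef
  have hhcont : ContinuousOn h (Set.Icc 0 (Real.pi/2)) :=
    ((hgcont.sub continuousOn_const).norm).sub ((hgcont.add continuousOn_const).norm)
  have hne : ∀ θ ∈ Set.Icc (0:ℝ) (Real.pi/2), h θ ≠ 0 := by
    intro θ hθ h0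
    have h1 := hprod θ hθ
    have h2 := hsum θ
    have h0' : ‖g θ - 1‖ - ‖g θ + 1‖ = 0 := h0
    have h3 : ‖g θ - 1‖ = ‖g θ + 1‖ := sub_eq_zero.mp h0'
    nlinarith [norm_nonneg (g θ - 1)]
  -- h is positive at 0
  have hπpos := Real.pi_pos
  have h0mem : (0:ℝ) ∈ Set.Icc (0:ℝ) (Real.pi/2) := ⟨le_refl _, by linarith⟩
  have hπmem : Real.pi/2 ∈ Set.Icc (0:ℝ) (Real.pi/2) := ⟨by linarith, le_refl _⟩
  have h0pos : 0 < h 0 := by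
    obtain ⟨him0, hre0⟩ := hr_sign R hRE
    have hrR : r ((R:ℝ):ℂ) = (((r ((R:ℝ):ℂ)).re : ℝ) : ℂ) := Complex.ext (by simp) (by simp [him0])
    have hg0 : g 0 = (((r ((R:ℝ):ℂ)).re / R^(n+1) : ℝ) : ℂ) := by
      rw [hgdef]
      simp only [hγ0]
      rw [Complex.ofReal_div, Complex.ofReal_pow]
      conv_lhs => rw [hrR]
    have hyneg : (r ((R:ℝ):ℂ)).re / R^(n+1) < 0 := div_neg_of_neg_of_pos hre0 (by positivity)
    have h01 : h 0 = |(r ((R:ℝ):ℂ)).re / R^(n+1) - 1| - |(r ((R:ℝ):ℂ)).re / R^(n+1) + 1| := by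
      rw [hhdef]
      simp only [hg0]
      rw [show (((((r ((R:ℝ):ℂ)).re / R^(n+1)) : ℝ)) : ℂ) - 1
            = ((((r ((R:ℝ):ℂ)).re / R^(n+1) - 1 : ℝ)) : ℂ) by push_cast; ring,
        show (((((r ((R:ℝ):ℂ)).re / R^(n+1)) : ℝ)) : ℂ) + 1
            = ((((r ((R:ℝ):ℂ)).re / R^(n+1) + 1 : ℝ)) : ℂ) by push_cast; ring,
        Complex.norm_real, Complex.norm_real, Real.norm_eq_abs, Real.norm_eq_abs]
    rw [h01]
    rcases abs_cases ((r ((R:ℝ):ℂ)).re / R^(n+1) - 1) with ⟨e1, _⟩ | ⟨e1, _⟩ <;>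
      rcases abs_cases ((r ((R:ℝ):ℂ)).re / R^(n+1) + 1) with ⟨e2, _⟩ | ⟨e2, _⟩ <;>
      rw [e1, e2] <;> linarith
  -- h is positive everywhere on the arc
  have hpos : ∀ θ ∈ Set.Icc (0:ℝ) (Real.pi/2), 0 < h θ := by
    by_contra hcon
    push_neg at hcon
    obtain ⟨θ₁, hθ₁, hle⟩ := hcon
    have hsub : Set.Icc (0:ℝ) θ₁ ⊆ Set.Icc 0 (Real.pi/2) :=
      Set.Icc_subset_Icc (le_refl _) hθ₁.2
    have := intermediate_value_Icc' hθ₁.1 (hhcont.mono hsub)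
    have h0in : (0:ℝ) ∈ Set.Icc (h θ₁) (h 0) := ⟨hle, le_of_lt h0pos⟩
    obtain ⟨θ₂, hθ₂, hzero⟩ := this h0in
    exact hne θ₂ (hsub hθ₂) hzero
  -- conclusion at θ = π/2
  set w : ℂ := γ (Real.pi/2) with hw
  set b : ℂ := g (Real.pi/2) with hb
  have hbclose : ‖b + 1‖ ≤ 1/8 := by
    have h1 := hprod _ hπmem
    have h2 := hsum (Real.pi/2)
    have h3 := hpos _ hπmem
    rw [hhdef] at h3
    simp only at h3
    nlinarith [norm_nonneg (g (Real.pi/2) + 1), norm_nonneg (g (Real.pi/2) - 1)]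
  have hbnorm : (7:ℝ)/8 ≤ ‖b‖ := by
    have h1 := norm_sub_le (b + 1) b
    have h2 : (b + 1) - b = 1 := by ring
    rw [h2, norm_one] at h1
    linarith
  have hbne : b ≠ 0 := by
    intro h0
    rw [h0] at hbnorm
    simp at hbnorm
    linarith
  have hrwne : r w ≠ 0 := by
    intro h0
    apply hbne
    rw [hb, hgdef]
    simp only [← hw, h0, zero_div]
  set a : ℂ := P.eval w / w^(n+2) with ha
  have haclose : ‖a - 1‖ ≤ 1/8 :=
    evalDivBound P (n+2) hPdeg hPm w (by rw [hw, hγnorm]; exact hR1)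
      (by rw [hw, hγnorm]; exact hRS₁)
  have hwne : w ≠ 0 := hγ0ne _
  have hwim : w.im = R := by rw [hw, hγim, Real.sin_pi_div_two, mul_one]
  have hwre : w.re = 0 := by rw [hw, hγre, Real.cos_pi_div_two, mul_zero]
  -- rewrite P/r at w
  have hrepr : P.eval w / r w = w * (a / b) := by
    rw [ha, hb, hgdef]
    simp only [← hw]
    have hp : w^(n+2) = w * w^(n+1) := by ring
    field_simp
    ring
  have hherg' := hherg w (by rw [hwim]; exact hRpos)
  rw [hrepr] at hherg'
  have himval : (w * (a / b)).im = R * (a / b).re := by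
    rw [Complex.mul_im, hwre, hwim]; ring
  have habclose : ‖a / b + 1‖ ≤ 2/7 := by
    have hab : a / b + 1 = (a + b) / b := by field_simp
    rw [hab, norm_div]
    have hnum : ‖a + b‖ ≤ 1/4 := by
      have : a + b = (a - 1) + (b + 1) := by ring
      rw [this]
      calc ‖(a-1) + (b+1)‖ ≤ ‖a-1‖ + ‖b+1‖ := norm_add_le _ _
        _ ≤ 1/4 := by linarith
    rw [div_le_iff₀ (by linarith)]
    linarith
  have hreneg : (a / b).re < 0 := by
    have h1 : (a / b + 1).re ≤ ‖a / b + 1‖ := by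
      exact Complex.re_le_norm _
    have h2 : (a / b + 1).re = (a / b).re + 1 := by simp
    linarith
  rw [himval] at hherg'
  nlinarith
end

section
/- The 2×2 first-order system ψ₁' = -ψ₁ - z̃αψ₁ + z̃ψ₂, ψ₂' = ψ₂ + z̃αψ₂ - z̃(α² + w)ψ₁ implies, upon eliminating ψ₂, the scalar equation -ψ₁'' + ψ₁ = z̃² w ψ₁ - z̃(4u - u'')ψ₁, where α = u' + 2u. -/
theorem stmt15 (z : ℂ) (u u1 u2 w ψ₁ ψ₂ p1 p1' p2 : ℝ → ℂ)
    (hu : ∀ x, HasDerivAt u (u1 x) x) (hu1 : ∀ x, HasDerivAt u1 (u2 x) x)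
    (hw : Continuous w)
    (hψ₁ : ∀ x, HasDerivAt ψ₁ (p1 x) x) (hp1 : ∀ x, HasDerivAt p1 (p1' x) x)
    (hψ₂ : ∀ x, HasDerivAt ψ₂ (p2 x) x)
    (α : ℝ → ℂ) (hα : ∀ x, α x = u1 x + 2 * u x)
    (e1 : ∀ x, p1 x = -(ψ₁ x) - z * α x * ψ₁ x + z * ψ₂ x)
    (e2 : ∀ x, p2 x = ψ₂ x + z * α x * ψ₂ x - z * ((α x)^2 + w x) * ψ₁ x) :
    ∀ x, -(p1' x) + ψ₁ x = z^2 * w x * ψ₁ x - z * (4 * u x - u2 x) * ψ₁ x := by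
  simp only [hα] at e1 e2
  intro x
  have hpeq : p1 = fun y => -(ψ₁ y) - z * ((u1 y + 2 * u y) * ψ₁ y) + z * ψ₂ y := by
    funext y; rw [e1 y]; ring
  have hg : HasDerivAt (fun y => -(ψ₁ y) - z * ((u1 y + 2 * u y) * ψ₁ y) + z * ψ₂ y)
      (-(p1 x) - z * ((u2 x + 2 * u1 x) * ψ₁ x + (u1 x + 2 * u x) * p1 x) + z * p2 x) x :=
    (((hψ₁ x).neg.sub ((((hu1 x).add ((hu x).const_mul 2)).mul (hψ₁ x)).const_mul z)).add
      ((hψ₂ x).const_mul z))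
  rw [← hpeq] at hg
  have key := (hp1 x).unique hg
  linear_combination (-1 : ℂ) * key + (1 + z * (u1 x + 2 * u x)) * e1 x - z * e2 x
end
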